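/- For every positive integer n, the total sum of Lah numbers 𝓛_n = ∑_{k=1}^{n} L(n,k) has the integral representation 𝓛_n = ∫_0^∞ (∑_{j=0}^∞ t^j/(j!(j+1)!)) t^n e^{-(1+t)} dt. -/

import Mathlib

open MeasureTheory Real Finset

/-- Lah numbers: `L(n,k) = C(n-1,k-1) * n! / k!` (as a real number). -/
noncomputable def lah (n k : ℕ) : ℝ :=
  ((n - 1).choose (k - 1) : ℝ) * (Nat.factorial n) / (Nat.factorial k)

/-- The total sum of Lah numbers `𝓛_n = ∑_{k=1}^n L(n,k)`. -/
noncomputable def lahTotal (n : ℕ) : ℝ := ∑ k ∈ Finset.Icc 1 n, lah n k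

lemma integral_pow_mul_exp_neg' (m : ℕ) :
    ∫ t in Set.Ioi (0:ℝ), t ^ m * Real.exp (-t) = (Nat.factorial m : ℝ) := by
  rw [← Real.Gamma_nat_eq_factorial, Real.Gamma_eq_integral (by positivity : (0:ℝ) < m + 1)]
  refine setIntegral_congr_fun measurableSet_Ioi fun t ht => ?_
  rw [add_sub_cancel_right, Real.rpow_natCast, mul_comm]

lemma integrableOn_pow_mul_exp_neg' (m : ℕ) :
    IntegrableOn (fun t : ℝ => t ^ m * Real.exp (-t)) (Set.Ioi 0) := by
  have h := Real.GammaIntegral_convergent (s := (m:ℝ)+1) (by positivity)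
  refine h.congr_fun (fun t ht => ?_) measurableSet_Ioi
  rw [add_sub_cancel_right]
  beta_reduce
  rw [Real.rpow_natCast, mul_comm]

lemma vandermonde' (n j : ℕ) (hn : 1 ≤ n) :
    (n + j).choose j = ∑ a ∈ range (j+1), (n-1).choose a * (j+1).choose (a+1) := by
  have h : n + j = (n - 1) + (j + 1) := by omega
  rw [h, Nat.add_choose_eq, Finset.Nat.sum_antidiagonal_eq_sum_range_succ_mk]
  refine Finset.sum_congr rfl fun a ha => ?_
  rw [Finset.mem_range] at ha
  congr 1
  rw [← Nat.choose_symm (by omega : a + 1 ≤ j + 1)]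
  congr 1
  omega

lemma key_sum (n : ℕ) (hn : 1 ≤ n) (j : ℕ) :
    ((Nat.factorial (n + j) : ℝ)) / ((Nat.factorial j : ℝ) * (Nat.factorial (j+1)))
      = ∑ a ∈ range (j+1), lah n (a+1) * (1 / (Nat.factorial (j - a) : ℝ)) := by
  have hstep : ∀ a ∈ range (j+1), lah n (a+1) * (1 / (Nat.factorial (j - a) : ℝ))
      = (((n-1).choose a * (j+1).choose (a+1) : ℕ) : ℝ)
          * (Nat.factorial n) / (Nat.factorial (j+1)) := by
    intro a ha
    rw [Finset.mem_range] at ha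
    have hc : ((j+1).choose (a+1) : ℕ) * Nat.factorial (a+1) * Nat.factorial (j-a)
        = Nat.factorial (j+1) := by
      have := Nat.choose_mul_factorial_mul_factorial (show a+1 ≤ j+1 by omega)
      rwa [show j + 1 - (a+1) = j - a by omega] at this
    have hcR : (((j+1).choose (a+1) : ℕ) : ℝ) * Nat.factorial (a+1) * Nat.factorial (j-a)
        = (Nat.factorial (j+1) : ℝ) := by exact_mod_cast hc
    unfold lah
    simp only [Nat.add_sub_cancel, Nat.cast_mul]
    have h1 : (Nat.factorial (a+1) : ℝ) ≠ 0 := by positivity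
    have h2 : (Nat.factorial (j-a) : ℝ) ≠ 0 := by positivity
    have h3 : (Nat.factorial (j+1) : ℝ) ≠ 0 := by positivity
    field_simp
    linear_combination (-((((n:ℕ)-1).choose a : ℝ))) * hcR
  rw [Finset.sum_congr rfl hstep]
  have hl : (Nat.factorial (n+j) : ℝ)
      = ((n+j).choose j : ℝ) * Nat.factorial j * Nat.factorial n := by
    exact_mod_cast (Nat.choose_mul_factorial_mul_factorial (show j ≤ n + j by omega)).symm.trans
      (by rw [show n + j - j = n by omega])
  rw [hl, vandermonde' n j hn]
  push_cast
  rw [← Finset.sum_div, ← Finset.sum_mul]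
  have h1 : (Nat.factorial j : ℝ) ≠ 0 := by positivity
  have h3 : (Nat.factorial (j+1) : ℝ) ≠ 0 := by positivity
  field_simp

lemma lah_eq_zero (n a : ℕ) (hn : 1 ≤ n) (ha : a ∉ range n) : lah n (a+1) = 0 := by
  rw [Finset.mem_range, not_lt] at ha
  unfold lah
  rw [Nat.add_sub_cancel, Nat.choose_eq_zero_of_lt (by omega)]
  simp

theorem lahTotal_integral_repr (n : ℕ) (hn : 1 ≤ n) :
    lahTotal n
      = ∫ t in Set.Ioi (0 : ℝ),
          (∑' j : ℕ, t ^ j / ((Nat.factorial j : ℝ) * (Nat.factorial (j + 1))))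
            * t ^ n * Real.exp (-(1 + t)) := by
  -- the summands after expanding
  set F : ℕ → ℝ → ℝ := fun j t =>
    (1 / ((Nat.factorial j : ℝ) * (Nat.factorial (j+1)))) *
      (Real.exp (-1) * (t ^ (n + j) * Real.exp (-t))) with hF
  -- the Cauchy-product factors
  set f : ℕ → ℝ := fun a => lah n (a+1) with hf
  set g : ℕ → ℝ := fun i => 1 / (Nat.factorial i : ℝ) with hg
  have hf_sum : Summable f := summable_of_ne_finset_zero
    (s := range n) (fun a ha => lah_eq_zero n a hn ha)
  have hf_norm : Summable fun a => ‖f a‖ := summable_of_ne_finset_zero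
    (s := range n) (fun a ha => by rw [hf]; simp [lah_eq_zero n a hn ha])
  have hg_sum : Summable g := by
    have := Real.summable_pow_div_factorial 1
    simpa [hg] using this
  have hg_norm : Summable fun i => ‖g i‖ := by
    refine hg_sum.congr fun i => ?_
    rw [Real.norm_of_nonneg (by positivity)]
  -- summability of the coefficient series
  have hS : Summable fun j => ((Nat.factorial (n + j) : ℝ))
      / ((Nat.factorial j : ℝ) * (Nat.factorial (j+1))) := by
    have h := (summable_norm_sum_mul_range_of_summable_norm (f := f) (g := g)
      hf_norm hg_norm).of_norm
    refine h.congr fun j => ?_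
    exact (key_sum n hn j).symm
  -- pointwise rewriting of the integrand
  have hpt : ∀ t : ℝ,
      (∑' j : ℕ, t ^ j / ((Nat.factorial j : ℝ) * (Nat.factorial (j + 1))))
        * t ^ n * Real.exp (-(1 + t)) = ∑' j : ℕ, F j t := by
    intro t
    rw [← tsum_mul_right, ← tsum_mul_right]
    refine tsum_congr fun j => ?_
    have hexp : Real.exp (-(1 + t)) = Real.exp (-1) * Real.exp (-t) := by
      rw [← Real.exp_add]; ring_nf
    simp only [hF, hexp, pow_add]
    ring
  -- integral of each summand
  have hint : ∀ j : ℕ, ∫ t in Set.Ioi (0:ℝ), F j t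
      = Real.exp (-1) * (((Nat.factorial (n + j) : ℝ))
          / ((Nat.factorial j : ℝ) * (Nat.factorial (j+1)))) := by
    intro j
    have : (fun t : ℝ => F j t) = fun t : ℝ =>
        ((1 / ((Nat.factorial j : ℝ) * (Nat.factorial (j+1)))) * Real.exp (-1))
          * (t ^ (n + j) * Real.exp (-t)) := by
      funext t; rw [hF]; ring
    rw [this, integral_const_mul, integral_pow_mul_exp_neg']
    ring
  -- integrability of each summand
  have hFint : ∀ j : ℕ, Integrable (F j) (volume.restrict (Set.Ioi (0:ℝ))) := by
    intro j
    have h : F j = fun t : ℝ =>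
        ((1 / ((Nat.factorial j : ℝ) * (Nat.factorial (j+1)))) * Real.exp (-1))
          * (t ^ (n + j) * Real.exp (-t)) := by
      funext t; rw [hF]; ring
    rw [h]
    exact (integrableOn_pow_mul_exp_neg' (n + j)).const_mul _
  -- swap integral and sum
  have hswap : ∫ t in Set.Ioi (0:ℝ), ∑' j : ℕ, F j t
      = ∑' j : ℕ, ∫ t in Set.Ioi (0:ℝ), F j t := by
    refine (integral_tsum_of_summable_integral_norm hFint ?_).symm
    have : ∀ j : ℕ, (∫ t in Set.Ioi (0:ℝ), ‖F j t‖)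
        = Real.exp (-1) * (((Nat.factorial (n + j) : ℝ))
            / ((Nat.factorial j : ℝ) * (Nat.factorial (j+1)))) := by
      intro j
      rw [← hint j]
      refine setIntegral_congr_fun measurableSet_Ioi fun t ht => ?_
      have ht' : (0:ℝ) < t := ht
      rw [hF]
      exact Real.norm_of_nonneg (by positivity)
    refine Summable.congr ?_ (fun j => (this j).symm)
    exact hS.mul_left _
  calc lahTotal n
      = Real.exp (-1) * ((∑' a, f a) * (∑' i, g i)) := by
        have h1 : ∑' a, f a = lahTotal n := by
          rw [tsum_eq_sum (s := range n) (fun a ha => lah_eq_zero n a hn ha), lahTotal]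
          refine Finset.sum_nbij' (fun a => a + 1) (fun k => k - 1) ?_ ?_ ?_ ?_ ?_ <;>
            simp_all <;> omega
        have h2 : ∑' i, g i = Real.exp 1 := by
          rw [Real.exp_eq_exp_ℝ, NormedSpace.exp_eq_tsum_div]
          exact tsum_congr fun i => by rw [hg]; simp
        rw [h1, h2,
          show Real.exp (-1) * (lahTotal n * Real.exp 1)
            = (Real.exp (-1) * Real.exp 1) * lahTotal n by ring, ← Real.exp_add]
        norm_num
    _ = Real.exp (-1) * ∑' j : ℕ, ∑ k ∈ range (j+1), f k * g (j - k) := by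
        rw [tsum_mul_tsum_eq_tsum_sum_range_of_summable_norm hf_norm hg_norm]
    _ = ∑' j : ℕ, ∫ t in Set.Ioi (0:ℝ), F j t := by
        rw [← tsum_mul_left]
        refine tsum_congr fun j => ?_
        rw [hint j, ← key_sum n hn j]
    _ = ∫ t in Set.Ioi (0:ℝ), ∑' j : ℕ, F j t := hswap.symm
    _ = _ := by
        refine setIntegral_congr_fun measurableSet_Ioi fun t ht => ?_
        exact (hpt t).symm
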